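/- Let H be a real inner product space, θ ∈ [0,1] and ε ∈ (−1,1). Then for all v₋, v₀, v₊ ∈ H, ⟨α₂ v₊ + α₁ v₀ + α₀ v₋ , β₂ v₊ + β₁ v₀ + β₀ v₋⟩ = ‖(v₊, v₀)‖²_{G(θ)} − ‖(v₀, v₋)‖²_{G(θ)} + ‖a₂ v₊ + a₁ v₀ + a₀ v₋‖², where a₁ = −√(θ(1−θ²))/(√2·(1+εθ)), a₂ = −((1−ε)/2)·a₁ and a₀ = −((1+ε)/2)·a₁. -/

import Mathlib

open scoped RealInnerProductSpace

noncomputable def dlnAlpha2 (θ : ℝ) : ℝ := (1 + θ) / 2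
noncomputable def dlnAlpha1 (θ : ℝ) : ℝ := -θ
noncomputable def dlnAlpha0 (θ : ℝ) : ℝ := (θ - 1) / 2

noncomputable def dlnBeta2 (θ ε : ℝ) : ℝ :=
  (1 / 4) * (1 + (1 - θ ^ 2) / (1 + ε * θ) ^ 2
    + ε ^ 2 * (θ * (1 - θ ^ 2)) / (1 + ε * θ) ^ 2 + θ)
noncomputable def dlnBeta1 (θ ε : ℝ) : ℝ :=
  (1 / 2) * (1 - (1 - θ ^ 2) / (1 + ε * θ) ^ 2)
noncomputable def dlnBeta0 (θ ε : ℝ) : ℝ :=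
  (1 / 4) * (1 + (1 - θ ^ 2) / (1 + ε * θ) ^ 2
    - ε ^ 2 * (θ * (1 - θ ^ 2)) / (1 + ε * θ) ^ 2 - θ)

noncomputable def dlnA1 (θ ε : ℝ) : ℝ :=
  -(Real.sqrt (θ * (1 - θ ^ 2))) / (Real.sqrt 2 * (1 + ε * θ))
noncomputable def dlnA2 (θ ε : ℝ) : ℝ := -((1 - ε) / 2) * dlnA1 θ ε
noncomputable def dlnA0 (θ ε : ℝ) : ℝ := -((1 + ε) / 2) * dlnA1 θ ε

/-- The square of the `G(θ)`-norm of the pair `(u, v)`. -/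
noncomputable def gNormSq {H : Type*} [NormedAddCommGroup H] (θ : ℝ) (u v : H) : ℝ :=
  ((1 + θ) / 4) * ‖u‖ ^ 2 + ((1 - θ) / 4) * ‖v‖ ^ 2

set_option maxHeartbeats 1600000 in
/-- G-stability identity of the variable-step DLN method in a real inner product space. -/
theorem dln_G_stability_identity {H : Type*} [NormedAddCommGroup H] [InnerProductSpace ℝ H]
    (θ ε : ℝ) (hθ : θ ∈ Set.Icc (0 : ℝ) 1) (hε : ε ∈ Set.Ioo (-1 : ℝ) 1)
    (vm v0 vp : H) :
    ⟪ dlnAlpha2 θ • vp + dlnAlpha1 θ • v0 + dlnAlpha0 θ • vm,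
      dlnBeta2 θ ε • vp + dlnBeta1 θ ε • v0 + dlnBeta0 θ ε • vm⟫
      = gNormSq θ vp v0 - gNormSq θ v0 vm
        + ‖dlnA2 θ ε • vp + dlnA1 θ ε • v0 + dlnA0 θ ε • vm‖ ^ 2 := by
  obtain ⟨hθ0, hθ1⟩ := hθ
  obtain ⟨hε0, hε1⟩ := hε
  have hd : (0:ℝ) < 1 + ε * θ := by nlinarith
  have hd' : (1:ℝ) + ε * θ ≠ 0 := ne_of_gt hd
  have hS : (0:ℝ) ≤ θ * (1 - θ ^ 2) := by nlinarith
  have h1 : dlnA1 θ ε ^ 2 = θ * (1 - θ ^ 2) / (2 * (1 + ε * θ) ^ 2) := by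
    rw [dlnA1, div_pow, neg_sq, mul_pow, Real.sq_sqrt hS, Real.sq_sqrt (by norm_num : (0:ℝ) ≤ 2)]
  have expand : ∀ c2 c1 c0 b2 b1 b0 : ℝ,
      ⟪c2 • vp + c1 • v0 + c0 • vm, b2 • vp + b1 • v0 + b0 • vm⟫
        = c2 * b2 * ⟪vp, vp⟫ + c1 * b1 * ⟪v0, v0⟫ + c0 * b0 * ⟪vm, vm⟫
          + (c2 * b1 + c1 * b2) * ⟪vp, v0⟫ + (c2 * b0 + c0 * b2) * ⟪vp, vm⟫
          + (c1 * b0 + c0 * b1) * ⟪v0, vm⟫ := by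
    intro c2 c1 c0 b2 b1 b0
    simp only [inner_add_left, inner_add_right, real_inner_smul_left, real_inner_smul_right,
      real_inner_comm v0 vp, real_inner_comm vm vp, real_inner_comm vm v0]
    ring
  have hw : dlnA2 θ ε • vp + dlnA1 θ ε • v0 + dlnA0 θ ε • vm
      = dlnA1 θ ε • ((-((1 - ε) / 2)) • vp + (1:ℝ) • v0 + (-((1 + ε) / 2)) • vm) := by
    rw [dlnA2, dlnA0]
    module
  rw [hw, norm_smul, mul_pow, Real.norm_eq_abs, sq_abs, h1,
    ← real_inner_self_eq_norm_sq, gNormSq, gNormSq,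
    ← real_inner_self_eq_norm_sq, ← real_inner_self_eq_norm_sq, ← real_inner_self_eq_norm_sq,
    expand, expand]
  generalize ⟪vp, vp⟫ = P
  generalize ⟪v0, v0⟫ = Q
  generalize ⟪vm, vm⟫ = R
  generalize ⟪vp, v0⟫ = X
  generalize ⟪vp, vm⟫ = Y
  generalize ⟪v0, vm⟫ = Z
  simp only [dlnAlpha2, dlnAlpha1, dlnAlpha0, dlnBeta2, dlnBeta1, dlnBeta0]
  generalize hD : 1 + ε * θ = D at hd' ⊢
  field_simp
  subst hD
  ring
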